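/- Let H be a δ-hyperbolic geodesic metric space and let p, q be two (λ,ε)-quasigeodesic paths in H joining points P₁,P₂ and Q₁,Q₂, respectively. Suppose H₀ ≥ 0 is such that dist(P₁,Q₁) ≤ H₀ and dist(P₂,Q₂) ≤ H₀. Then there exists K = K(δ,λ,ε,H₀) ≥ 0, depending only on δ, λ, ε and H₀, such that p and q asynchronously K-fellow travel. -/

import Mathlib

open Filter Set

/-- `p` is a `(λ, ε)`-quasigeodesic on the parameter set `s`:
`|a − b|/λ − ε ≤ dist (p a) (p b) ≤ λ|a − b| + ε` for all parameters `a, b ∈ s`. -/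
def IsQGOn {X : Type*} [MetricSpace X] (lam eps : ℝ) (p : ℝ → X) (s : Set ℝ) : Prop :=
  ∀ a ∈ s, ∀ b ∈ s,
    |a - b| / lam - eps ≤ dist (p a) (p b) ∧ dist (p a) (p b) ≤ lam * |a - b| + eps

/-- `p` is a geodesic on the parameter set `s`. -/
def IsGeodOn {X : Type*} [MetricSpace X] (p : ℝ → X) (s : Set ℝ) : Prop :=
  ∀ a ∈ s, ∀ b ∈ s, dist (p a) (p b) = |a - b|

/-- `p` is a geodesic path from `x` to `y`, parameterized by arclength on `[0, dist x y]`. -/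
def GeodFromTo {X : Type*} [MetricSpace X] (p : ℝ → X) (x y : X) : Prop :=
  p 0 = x ∧ p (dist x y) = y ∧ IsGeodOn p (Set.Icc 0 (dist x y))

/-- `X` is a geodesic metric space. -/
def GeodesicSpace (X : Type*) [MetricSpace X] : Prop :=
  ∀ x y : X, ∃ p : ℝ → X, GeodFromTo p x y

/-- All geodesic triangles of `X` are `δ`-thin: each side is contained in the closed
`δ`-neighborhood of the union of the other two sides. -/
def SlimTriangles (X : Type*) [MetricSpace X] (δ : ℝ) : Prop :=
  ∀ (x y z : X) (p q r : ℝ → X),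
    GeodFromTo p x y → GeodFromTo q y z → GeodFromTo r x z →
    ∀ t ∈ Set.Icc (0 : ℝ) (dist x y),
      Metric.infDist (p t) (q '' Set.Icc 0 (dist y z) ∪ r '' Set.Icc 0 (dist x z)) ≤ δ

/-- A path defined on `[0, T]`, extended to all of `ℝ` by constancy outside `[0, T]`. -/
def IsPathOn {X : Type*} [MetricSpace X] (p : ℝ → X) (T : ℝ) : Prop :=
  (∀ t ≤ (0 : ℝ), p t = p 0) ∧ ∀ t ≥ T, p t = p T

/-- Two subsets of `X` are `K`-close: each is contained in the closed `K`-neighborhood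
of the other. -/
def KClose {X : Type*} [MetricSpace X] (K : ℝ) (Y Z : Set X) : Prop :=
  (∀ y ∈ Y, Metric.infDist y Z ≤ K) ∧ ∀ z ∈ Z, Metric.infDist z Y ≤ K

/-- The paths `p` and `q` asynchronously `K`-fellow travel: there are non-decreasing
proper continuous reparameterizations `φ, ψ : [0,∞) → [0,∞)` with
`dist (p (φ t)) (q (ψ t)) ≤ K` for all `t ≥ 0`. -/
def AsyncFellowTravel {X : Type*} [MetricSpace X] (K : ℝ) (p q : ℝ → X) : Prop :=
  ∃ φ ψ : ℝ → ℝ,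
    MonotoneOn φ (Set.Ici 0) ∧ ContinuousOn φ (Set.Ici 0) ∧
      Set.MapsTo φ (Set.Ici 0) (Set.Ici 0) ∧ Tendsto φ atTop atTop ∧
    MonotoneOn ψ (Set.Ici 0) ∧ ContinuousOn ψ (Set.Ici 0) ∧
      Set.MapsTo ψ (Set.Ici 0) (Set.Ici 0) ∧ Tendsto ψ atTop atTop ∧
    ∀ t : ℝ, 0 ≤ t → dist (p (φ t)) (q (ψ t)) ≤ K

open Metric

section Helpers
variable {X : Type*} [MetricSpace X]

lemma GeodFromTo.continuousOn {g : ℝ → X} {x y : X} (h : GeodFromTo g x y) :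
    ContinuousOn g (Icc 0 (dist x y)) := by
  have : LipschitzOnWith 1 g (Icc 0 (dist x y)) := by
    intro a ha b hb
    rw [edist_dist, edist_dist, h.2.2 a ha b hb]
    simp [Real.dist_eq]
  exact this.continuousOn

lemma GeodFromTo.compactImage {g : ℝ → X} {x y : X} (h : GeodFromTo g x y) :
    IsCompact (g '' Icc 0 (dist x y)) :=
  isCompact_Icc.image_of_continuousOn h.continuousOn

lemma GeodFromTo.nonemptyImage {g : ℝ → X} {x y : X} (h : GeodFromTo g x y) :
    (g '' Icc 0 (dist x y)).Nonempty :=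
  ⟨g 0, ⟨0, by simp [dist_nonneg], rfl⟩⟩

lemma near_of_infDist {s : Set X} (hs : IsCompact s) (hn : s.Nonempty) {x : X} {d : ℝ}
    (h : infDist x s ≤ d) : ∃ z ∈ s, dist x z ≤ d := by
  obtain ⟨z, hz, he⟩ := hs.exists_infDist_eq_dist hn x
  exact ⟨z, hz, he ▸ h⟩

lemma geod_reverse {g : ℝ → X} {x y : X} (h : GeodFromTo g x y) :
    GeodFromTo (fun s => g (dist x y - s)) y x := by
  obtain ⟨h0, h1, hgeo⟩ := h
  refine ⟨by simpa [dist_comm] using h1, by simpa [dist_comm] using h0, ?_⟩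
  intro a ha b hb
  rw [dist_comm y x] at ha hb
  have ha' : dist x y - a ∈ Icc 0 (dist x y) := ⟨by linarith [ha.2], by linarith [ha.1]⟩
  have hb' : dist x y - b ∈ Icc 0 (dist x y) := ⟨by linarith [hb.2], by linarith [hb.1]⟩
  rw [hgeo _ ha' _ hb']
  rw [abs_sub_comm]
  congr 1; ring

lemma geod_restrict {g : ℝ → X} {x y : X} (h : GeodFromTo g x y) {a b : ℝ}
    (ha : a ∈ Icc 0 (dist x y)) (hb : b ∈ Icc 0 (dist x y)) (hab : a ≤ b) :
    GeodFromTo (fun s => g (a + s)) (g a) (g b) := by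
  have hd : dist (g a) (g b) = b - a := by
    rw [h.2.2 a ha b hb, abs_sub_comm, abs_of_nonneg (by linarith)]
  refine ⟨by simp, by rw [hd]; norm_num, ?_⟩
  intro u hu v hv
  rw [hd] at hu hv
  have hu' : a + u ∈ Icc 0 (dist x y) := ⟨by linarith [hu.1, ha.1], by linarith [hu.2, hb.2]⟩
  have hv' : a + v ∈ Icc 0 (dist x y) := ⟨by linarith [hv.1, ha.1], by linarith [hv.2, hb.2]⟩
  rw [h.2.2 _ hu' _ hv']
  congr 1; ring

/-- chain along a coarsely-Lipschitz map between parameters `a` and `b`. -/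
lemma chain_along {f : ℝ → X} {a b C E : ℝ} (hC : 0 ≤ C) (hE : 0 ≤ E)
    (hf : ∀ u ∈ Set.uIcc a b, ∀ v ∈ Set.uIcc a b, dist (f u) (f v) ≤ C * |u - v| + E) :
    ∃ (m : ℕ) (c : ℕ → X), c 0 = f a ∧ c m = f b ∧ (m : ℝ) ≤ |b - a| + 1 ∧
      (∀ j < m, dist (c j) (c (j + 1)) ≤ C + E) ∧
      (∀ j ≤ m, ∃ u ∈ Set.uIcc a b, c j = f u) := by
  set m := Nat.ceil |b - a| with hm
  set θ : ℕ → ℝ := fun j => a + (min j m : ℕ) * (b - a) / m with hθ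
  have habs : (0:ℝ) ≤ |b - a| := abs_nonneg _
  have hmle : (m : ℝ) ≤ |b - a| + 1 := (Nat.ceil_lt_add_one habs).le
  have hba : |b - a| ≤ (m : ℝ) := Nat.le_ceil _
  have hθmem : ∀ j, θ j ∈ Set.uIcc a b := by
    intro j
    rcases eq_or_ne m 0 with h0 | h0
    · have : |b - a| ≤ 0 := by exact_mod_cast h0 ▸ hba
      have : b = a := by
        have := abs_nonneg (b - a); have h2 : |b - a| = 0 := le_antisymm ‹|b-a| ≤ 0› this
        have := abs_eq_zero.mp h2; linarith
      simp [hθ, h0, this, Set.left_mem_uIcc]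
    · have hmpos : (0:ℝ) < m := by exact_mod_cast Nat.pos_of_ne_zero h0
      set r : ℝ := (min j m : ℕ) / m with hr
      have hr0 : 0 ≤ r := by positivity
      have hr1 : r ≤ 1 := by
        rw [hr, div_le_one hmpos]; exact_mod_cast Nat.min_le_right j m
      have hθj : θ j = a + r * (b - a) := by rw [hθ, hr]; ring
      rw [Set.uIcc_eq_union]
      rcases le_total a b with hab | hab
      · left; constructor
        · rw [hθj]; nlinarith
        · rw [hθj]; nlinarith
      · right; constructor
        · rw [hθj]; nlinarith
        · rw [hθj]; nlinarith
  refine ⟨m, fun j => f (θ j), by simp [hθ], ?_, hmle, ?_, fun j _ => ⟨θ j, hθmem j, rfl⟩⟩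
  · rcases eq_or_ne m 0 with h0 | h0
    · have : |b - a| ≤ 0 := by exact_mod_cast h0 ▸ hba
      have h2 : |b - a| = 0 := le_antisymm this (abs_nonneg _)
      have : b = a := by have := abs_eq_zero.mp h2; linarith
      simp [hθ, h0, this]
    · have hmpos : (0:ℝ) < m := by exact_mod_cast Nat.pos_of_ne_zero h0
      have : θ m = b := by
        rw [hθ]; simp; field_simp; ring
      simp only [this]
  · intro j hj
    have hmpos : (0:ℝ) < m := by
      have hmp : 0 < m := by omega
      exact_mod_cast hmp
    have h1 : (min j m : ℕ) = j := by simp [Nat.min_eq_left hj.le]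
    have h2 : (min (j+1) m : ℕ) = j + 1 := by simp [Nat.min_eq_left hj]
    have hdiff : |θ j - θ (j+1)| = |b - a| / m := by
      rw [hθ]; simp only [h1, h2]
      rw [show a + (j:ℝ) * (b - a) / m - (a + ((j:ℕ)+1 : ℕ) * (b - a) / m) = -((b-a)/m) by
        push_cast; ring]
      rw [abs_neg, abs_div, abs_of_nonneg hmpos.le]
    calc dist (f (θ j)) (f (θ (j+1))) ≤ C * |θ j - θ (j+1)| + E :=
          hf _ (hθmem j) _ (hθmem (j+1))
      _ ≤ C * 1 + E := by
          refine add_le_add (mul_le_mul_of_nonneg_left ?_ hC) (le_refl E)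
          rw [hdiff, div_le_one hmpos]; exact hba
      _ = C + E := by ring

lemma chain_concat {P : X → Prop} {gap : ℝ} (m1 m2 : ℕ) (c1 c2 : ℕ → X)
    (h1e : c1 m1 = c2 0) (h1 : ∀ j < m1, dist (c1 j) (c1 (j+1)) ≤ gap)
    (h2 : ∀ j < m2, dist (c2 j) (c2 (j+1)) ≤ gap)
    (hP1 : ∀ j ≤ m1, P (c1 j)) (hP2 : ∀ j ≤ m2, P (c2 j)) :
    ∃ c : ℕ → X, c 0 = c1 0 ∧ c (m1 + m2) = c2 m2 ∧
      (∀ j < m1 + m2, dist (c j) (c (j+1)) ≤ gap) ∧ (∀ j ≤ m1 + m2, P (c j)) := by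
  refine ⟨fun j => if j < m1 then c1 j else c2 (j - m1), ?_, ?_, ?_, ?_⟩
  · rcases Nat.eq_zero_or_pos m1 with h | h
    · subst h; simpa using h1e.symm
    · simp [h]
  · have : ¬ (m1 + m2 < m1) := by omega
    simp [this]
  · intro j hj
    rcases lt_trichotomy (j+1) m1 with h | h | h
    · have : j < m1 := by omega
      simpa [this, h] using h1 j this
    · have hj1 : j < m1 := by omega
      have : ¬ (j + 1 < m1) := by omega
      simp only [hj1, if_true, this, if_false]
      rw [show j + 1 - m1 = 0 by omega, ← h1e]
      have := h1 j hj1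
      rwa [show j + 1 = m1 by omega] at this
    · have hj1 : ¬ (j < m1) := by omega
      have hj2 : ¬ (j + 1 < m1) := by omega
      simp only [hj1, hj2, if_false]
      rw [show j + 1 - m1 = (j - m1) + 1 by omega]
      exact h2 (j - m1) (by omega)
  · intro j hj
    by_cases h : j < m1
    · simpa [h] using hP1 j h.le
    · simpa [h] using hP2 (j - m1) (by omega)

end Helpers

section ChainLog
variable {X : Type*} [MetricSpace X] {δ : ℝ}

lemma chain_log (hδ : 0 ≤ δ) (hG : GeodesicSpace X) (hSl : SlimTriangles X δ)
    {gap : ℝ} (hgap : 0 ≤ gap) :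
    ∀ (k : ℕ) (n : ℕ), n ≤ 2 ^ k → ∀ (c : ℕ → X) (x y : X) (g : ℝ → X),
      GeodFromTo g x y → c 0 = x → c n = y →
      (∀ i < n, dist (c i) (c (i+1)) ≤ gap) →
      ∀ s ∈ Icc 0 (dist x y), ∃ i ≤ n, dist (g s) (c i) ≤ δ * k + gap := by
  intro k
  induction k with
  | zero =>
    intro n hn c x y g hg hc0 hcn hstep s hs
    interval_cases n
    · refine ⟨0, le_rfl, ?_⟩
      have hxy : x = y := by rw [← hc0, ← hcn]
      have : dist x y = 0 := by simp [hxy]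
      have hs0 : s = 0 := le_antisymm (this ▸ hs.2) hs.1
      simp [hs0, hg.1, hc0, hgap, dist_comm]
    · refine ⟨0, by norm_num, ?_⟩
      have h1 : dist (g s) (c 0) = s := by
        rw [hc0, ← hg.1, hg.2.2 s hs 0 (by simp [dist_nonneg])]
        rw [show s - 0 = s by ring, abs_of_nonneg hs.1]
      have h2 : dist x y ≤ gap := by
        rw [← hc0, ← hcn]; simpa using hstep 0 (by norm_num)
      rw [h1]; simpa using le_trans hs.2 h2
  | succ k ih =>
    intro n hn c x y g hg hc0 hcn hstep s hs
    by_cases hsmall : n ≤ 2 ^ k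
    · obtain ⟨i, hi, hd⟩ := ih n hsmall c x y g hg hc0 hcn hstep s hs
      exact ⟨i, hi, le_trans hd (by push_cast; nlinarith)⟩
    set m := n / 2 with hm
    have hm1 : m ≤ 2 ^ k := by omega
    have hm2 : n - m ≤ 2 ^ k := by
      have : n ≤ 2 ^ (k+1) := hn
      have : 2 ^ (k+1) = 2 ^ k + 2 ^ k := by ring
      omega
    set w := c m with hw
    obtain ⟨r, hr⟩ := hG x w
    obtain ⟨q, hq⟩ := hG y w
    have hinf := hSl x y w g q r hg hq hr s hs
    have hcomp : IsCompact (q '' Icc 0 (dist y w) ∪ r '' Icc 0 (dist x w)) :=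
      hq.compactImage.union hr.compactImage
    have hne : (q '' Icc 0 (dist y w) ∪ r '' Icc 0 (dist x w)).Nonempty :=
      hq.nonemptyImage.mono subset_union_left
    obtain ⟨z, hz, hdz⟩ := near_of_infDist hcomp hne hinf
    rcases hz with hz | hz
    · -- z on geodesic from y to w : use reversed chain
      obtain ⟨s', hs', hzq⟩ := hz
      set c' : ℕ → X := fun j => c (n - j) with hc'
      have hrev0 : c' 0 = y := by simp [hc', hcn]
      have hrevm : c' (n - m) = w := by
        simp only [hc']
        rw [show n - (n - m) = m by omega]
      have hrevstep : ∀ i < n - m, dist (c' i) (c' (i+1)) ≤ gap := by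
        intro i hi
        simp only [hc']
        rw [dist_comm, show n - (i+1) = (n - i - 1) by omega]
        have := hstep (n - i - 1) (by omega)
        rwa [show n - i - 1 + 1 = n - i by omega] at this
      obtain ⟨i, hi, hd⟩ := ih (n - m) hm2 c' y w q hq hrev0 hrevm hrevstep s' hs'
      refine ⟨n - i, by omega, ?_⟩
      subst hzq
      calc dist (g s) (c (n-i)) ≤ dist (g s) (q s') + dist (q s') (c (n-i)) := dist_triangle _ _ _
        _ ≤ δ + (δ * k + gap) := add_le_add hdz hd
        _ = δ * (k+1 : ℕ) + gap := by push_cast; ring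
    · obtain ⟨s', hs', hzr⟩ := hz
      have hstep' : ∀ i < m, dist (c i) (c (i+1)) ≤ gap := fun i hi => hstep i (by omega)
      obtain ⟨i, hi, hd⟩ := ih m hm1 c x w r hr hc0 rfl hstep' s' hs'
      refine ⟨i, by omega, ?_⟩
      subst hzr
      calc dist (g s) (c i) ≤ dist (g s) (r s') + dist (r s') (c i) := dist_triangle _ _ _
        _ ≤ δ + (δ * k + gap) := add_le_add hdz hd
        _ = δ * (k+1 : ℕ) + gap := by push_cast; ring

end ChainLog

lemma solve_log {x A a b C : ℝ} (hx : 0 ≤ x) (hA : 0 ≤ A) (ha : 0 ≤ a) (hb : 1 ≤ b)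
    (hC : 0 ≤ C) (h : x ≤ A * Real.log (a * x + b) + C) :
    x ≤ 2 * A * b + 2 * A * Real.log (2 * A * a + 1) + 2 * C := by
  set M : ℝ := 2 * A * a + 1 with hM
  have hM1 : 1 ≤ M := by nlinarith
  have hM0 : 0 < M := by linarith
  have hlogM : 0 ≤ Real.log M := Real.log_nonneg hM1
  have ht0 : 0 < a * x + b := by nlinarith
  have hlog : Real.log (a * x + b) ≤ (a * x + b) / M + Real.log M := by
    have h1 : Real.log ((a * x + b) / M) ≤ (a * x + b) / M - 1 :=
      Real.log_le_sub_one_of_pos (by positivity)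
    have h2 : Real.log ((a * x + b) / M) = Real.log (a * x + b) - Real.log M :=
      Real.log_div (by positivity) (by positivity)
    linarith
  have key : x ≤ A * ((a * x + b) / M + Real.log M) + C := by
    calc x ≤ A * Real.log (a * x + b) + C := h
      _ ≤ A * ((a * x + b) / M + Real.log M) + C := by nlinarith
  have hAxM : A * (a * x) / M ≤ x / 2 := by
    rw [div_le_iff₀ hM0]
    nlinarith
  have hAbM : A * b / M ≤ A * b := by
    rw [div_le_iff₀ hM0]
    nlinarith [mul_nonneg hA (le_trans zero_le_one hb)]
  have expand : A * ((a * x + b) / M + Real.log M) = A * (a*x) / M + A * b / M + A * Real.log M := by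
    field_simp
  nlinarith [key, hAxM, hAbM, expand]

section Morse1
open Real
variable {X : Type*} [MetricSpace X]

noncomputable def morseR (δ lam eps : ℝ) : ℝ :=
  2*(2*δ)*(lam*(2+eps)+5) + 2*(2*δ)*Real.log (2*(2*δ)*(6*lam+2)+1) + 2*(δ+lam+eps+2)

lemma morseR_big {δ lam eps : ℝ} (hδ : 0 ≤ δ) (hlam : 0 < lam) (heps : 0 ≤ eps) :
    lam + eps + 2 ≤ morseR δ lam eps ∧ 0 ≤ morseR δ lam eps := by
  have h1 : (1:ℝ) ≤ 2*(2*δ)*(6*lam+2)+1 := by nlinarith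
  have h2 : 0 ≤ Real.log (2*(2*δ)*(6*lam+2)+1) := Real.log_nonneg h1
  have h3 : 0 ≤ 2*(2*δ)*(lam*(2+eps)+5) := by positivity
  have h4 : 0 ≤ 2*(2*δ)*Real.log (2*(2*δ)*(6*lam+2)+1) := by positivity
  unfold morseR
  constructor <;> nlinarith

set_option maxHeartbeats 2000000 in
lemma geod_near_qg {δ lam eps : ℝ} (hδ : 0 ≤ δ) (hlam : 0 < lam) (heps : 0 ≤ eps)
    (hG : GeodesicSpace X) (hSl : SlimTriangles X δ)
    {p : ℝ → X} {S : ℝ} (hS0 : 0 ≤ S) (hqg : IsQGOn lam eps p (Set.Icc 0 S))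
    {γ : ℝ → X} (hγ : GeodFromTo γ (p 0) (p S)) :
    ∀ s ∈ Set.Icc 0 (dist (p 0) (p S)), Metric.infDist (γ s) (p '' Set.Icc 0 S) ≤ morseR δ lam eps := by
  classical
  set E := p '' Set.Icc 0 S with hE
  have hEne : E.Nonempty := ⟨p 0, 0, ⟨le_rfl, hS0⟩, rfl⟩
  set L := dist (p 0) (p S) with hLdef
  have hL0 : 0 ≤ L := dist_nonneg
  have hFc : ContinuousOn (fun s => Metric.infDist (γ s) E) (Set.Icc 0 L) :=
    (Metric.continuous_infDist_pt E).comp_continuousOn hγ.continuousOn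
  obtain ⟨s₀, hs₀, hmax'⟩ := isCompact_Icc.exists_isMaxOn ⟨0, by simp [hL0]⟩ hFc
  have hmax : ∀ s ∈ Set.Icc 0 L, Metric.infDist (γ s) E ≤ Metric.infDist (γ s₀) E := hmax'
  set D := Metric.infDist (γ s₀) E with hDdef
  have hD0 : 0 ≤ D := Metric.infDist_nonneg
  suffices hDR : D ≤ morseR δ lam eps by
    intro s hs; exact le_trans (hmax s hs) hDR
  set g := γ s₀ with hgdef
  have hlow : ∀ z ∈ E, D ≤ dist g z := fun z hz => Metric.infDist_le_dist_of_mem hz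
  set su := max (s₀ - 2*D) 0 with hsudef
  set sw := min (s₀ + 2*D) L with hswdef
  have hsumem : su ∈ Set.Icc 0 L := ⟨le_max_right _ _, max_le (by linarith [hs₀.2]) hL0⟩
  have hswmem : sw ∈ Set.Icc 0 L := ⟨le_min (by linarith [hs₀.1]) hL0, min_le_right _ _⟩
  have hsus₀ : su ≤ s₀ := max_le (by linarith) hs₀.1
  have hs₀sw : s₀ ≤ sw := le_min (by linarith) hs₀.2
  have hsu2D : s₀ - 2*D ≤ su := le_max_left _ _
  have hsw2D : sw ≤ s₀ + 2*D := min_le_left _ _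
  have hdsu : dist g (γ su) = s₀ - su := by
    rw [hγ.2.2 s₀ hs₀ su hsumem, abs_of_nonneg (by linarith)]
  have hdsw : dist g (γ sw) = sw - s₀ := by
    rw [hγ.2.2 s₀ hs₀ sw hswmem, abs_of_nonpos (by linarith), neg_sub]
  -- witness on the `su` side
  have hwita : ∃ a ∈ Set.Icc 0 S, dist (γ su) (p a) ≤ D + 1 ∧
      ∀ z : X, dist (γ su) z ≤ dist (γ su) (p a) → D - 1 ≤ dist g z := by
    by_cases h0 : su = 0
    · refine ⟨0, ⟨le_rfl, hS0⟩, ?_, ?_⟩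
      · rw [h0, hγ.1]; simp; linarith
      · intro z hz
        rw [h0, hγ.1, dist_self] at hz
        have hz0 : dist (p 0) z = 0 := le_antisymm hz dist_nonneg
        have : z = p 0 := by rw [← dist_eq_zero]; rwa [dist_comm]
        rw [this]
        have := hlow (p 0) ⟨0, ⟨le_rfl, hS0⟩, rfl⟩
        linarith
    · have hsueq : su = s₀ - 2*D := by
        rcases max_cases (s₀ - 2*D) 0 with ⟨h, _⟩ | ⟨h, _⟩
        · rw [hsudef, h]
        · exact absurd (hsudef ▸ h) h0
      have hFsu : Metric.infDist (γ su) E ≤ D := hmax su hsumem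
      have : Metric.infDist (γ su) E < D + 1 := by linarith
      obtain ⟨z, hzE, hdz⟩ := (Metric.infDist_lt_iff hEne).mp this
      obtain ⟨a, haI, rfl⟩ := hzE
      refine ⟨a, haI, hdz.le, ?_⟩
      intro z hz
      have h1 : dist g (γ su) = 2*D := by rw [hdsu, hsueq]; ring
      have h2 := dist_triangle g z (γ su)
      rw [dist_comm z (γ su)] at h2
      linarith
  -- witness on the `sw` side
  have hwitb : ∃ b ∈ Set.Icc 0 S, dist (γ sw) (p b) ≤ D + 1 ∧
      ∀ z : X, dist (γ sw) z ≤ dist (γ sw) (p b) → D - 1 ≤ dist g z := by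
    by_cases h0 : sw = L
    · refine ⟨S, ⟨hS0, le_rfl⟩, ?_, ?_⟩
      · rw [h0, hγ.2.1]; simp; linarith
      · intro z hz
        rw [h0, hγ.2.1, dist_self] at hz
        have hz0 : dist (p S) z = 0 := le_antisymm hz dist_nonneg
        have : z = p S := by rw [← dist_eq_zero]; rwa [dist_comm]
        rw [this]
        have := hlow (p S) ⟨S, ⟨hS0, le_rfl⟩, rfl⟩
        linarith
    · have hsweq : sw = s₀ + 2*D := by
        rcases min_cases (s₀ + 2*D) L with ⟨h, _⟩ | ⟨h, _⟩
        · rw [hswdef, h]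
        · exact absurd (hswdef ▸ h) h0
      have hFsw : Metric.infDist (γ sw) E ≤ D := hmax sw hswmem
      have : Metric.infDist (γ sw) E < D + 1 := by linarith
      obtain ⟨z, hzE, hdz⟩ := (Metric.infDist_lt_iff hEne).mp this
      obtain ⟨b, hbI, rfl⟩ := hzE
      refine ⟨b, hbI, hdz.le, ?_⟩
      intro z hz
      have h1 : dist g (γ sw) = 2*D := by rw [hdsw, hsweq]; ring
      have h2 := dist_triangle g z (γ sw)
      rw [dist_comm z (γ sw)] at h2
      linarith
  obtain ⟨a, haI, hda, hPa⟩ := hwita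
  obtain ⟨b, hbI, hdb, hPb⟩ := hwitb
  set gap := lam + eps + 1 with hgapdef
  have hgap0 : (0:ℝ) ≤ gap := by positivity
  -- connector chain 1 : from γ su to p a
  obtain ⟨h₁, hh₁⟩ := hG (γ su) (p a)
  set d₁ := dist (γ su) (p a) with hd₁
  have hd₁0 : 0 ≤ d₁ := dist_nonneg
  obtain ⟨m₁, c₁, hc₁0, hc₁m, hm₁le, hc₁step, hc₁pts⟩ :=
    chain_along (f := h₁) (a := 0) (b := d₁) (C := 1) (E := 0) zero_le_one le_rfl
      (by
        intro u hu v hv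
        rw [Set.uIcc_of_le hd₁0] at hu hv
        rw [hh₁.2.2 u hu v hv]; simp)
  rw [hh₁.1] at hc₁0
  rw [hh₁.2.1] at hc₁m
  -- chain along p from a to b
  obtain ⟨m₂, c₂, hc₂0, hc₂m, hm₂le, hc₂step, hc₂pts⟩ :=
    chain_along (f := p) (a := a) (b := b) (C := lam) (E := eps) hlam.le heps
      (by
        intro u hu v hv
        have hsub : Set.uIcc a b ⊆ Set.Icc 0 S := Set.uIcc_subset_Icc haI hbI
        exact (hqg u (hsub hu) v (hsub hv)).2)
  -- connector chain 2 : from p b to γ sw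
  obtain ⟨h₃, hh₃⟩ := hG (p b) (γ sw)
  set d₃ := dist (p b) (γ sw) with hd₃
  have hd₃0 : 0 ≤ d₃ := dist_nonneg
  obtain ⟨m₃, c₃, hc₃0, hc₃m, hm₃le, hc₃step, hc₃pts⟩ :=
    chain_along (f := h₃) (a := 0) (b := d₃) (C := 1) (E := 0) zero_le_one le_rfl
      (by
        intro u hu v hv
        rw [Set.uIcc_of_le hd₃0] at hu hv
        rw [hh₃.2.2 u hu v hv]; simp)
  rw [hh₃.1] at hc₃0
  rw [hh₃.2.1] at hc₃m
  -- the predicate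
  set P : X → Prop := fun z => D - 1 ≤ dist g z with hPdef
  have hP1 : ∀ j ≤ m₁, P (c₁ j) := by
    intro j hj
    obtain ⟨u, hu, hcu⟩ := hc₁pts j hj
    rw [Set.uIcc_of_le hd₁0] at hu
    have : dist (γ su) (c₁ j) ≤ d₁ := by
      rw [hcu, ← hh₁.1]
      rw [hh₁.2.2 0 (by simp [hd₁0]) u hu]
      rw [abs_of_nonpos (by linarith [hu.1]), neg_sub]; linarith [hu.2]
    exact hPa _ this
  have hP2 : ∀ j ≤ m₂, P (c₂ j) := by
    intro j hj
    obtain ⟨u, hu, hcu⟩ := hc₂pts j hj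
    have huI : u ∈ Set.Icc 0 S := Set.uIcc_subset_Icc haI hbI hu
    have : D ≤ dist g (c₂ j) := by rw [hcu]; exact hlow _ ⟨u, huI, rfl⟩
    rw [hPdef]; dsimp only; linarith
  have hP3 : ∀ j ≤ m₃, P (c₃ j) := by
    intro j hj
    obtain ⟨u, hu, hcu⟩ := hc₃pts j hj
    rw [Set.uIcc_of_le hd₃0] at hu
    have heq : dist (γ sw) (p b) = d₃ := by rw [hd₃, dist_comm]
    have hcalc : dist (γ sw) (c₃ j) ≤ d₃ := by
      calc dist (γ sw) (c₃ j) = dist (h₃ d₃) (h₃ u) := by rw [hcu, hh₃.2.1]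
        _ = |d₃ - u| := hh₃.2.2 d₃ ⟨hd₃0, le_rfl⟩ u hu
        _ = d₃ - u := abs_of_nonneg (by linarith [hu.2])
        _ ≤ d₃ := by linarith [hu.1]
    exact hPb _ (by rw [heq]; exact hcalc)
  -- weaken steps to gap
  have hc₁step' : ∀ j < m₁, dist (c₁ j) (c₁ (j+1)) ≤ gap := by
    intro j hj; refine le_trans (hc₁step j hj) ?_; rw [hgapdef]; linarith
  have hc₂step' : ∀ j < m₂, dist (c₂ j) (c₂ (j+1)) ≤ gap := by
    intro j hj; refine le_trans (hc₂step j hj) ?_; rw [hgapdef]; linarith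
  have hc₃step' : ∀ j < m₃, dist (c₃ j) (c₃ (j+1)) ≤ gap := by
    intro j hj; refine le_trans (hc₃step j hj) ?_; rw [hgapdef]; linarith
  -- concatenate
  obtain ⟨c12, hc12_0, hc12_m, hc12_step, hc12_P⟩ :=
    chain_concat (P := P) m₁ m₂ c₁ c₂ (hc₁m.trans hc₂0.symm) hc₁step' hc₂step' hP1 hP2
  obtain ⟨c, hc0, hcm, hcstep, hcP⟩ :=
    chain_concat (P := P) (m₁ + m₂) m₃ c12 c₃ (hc12_m.trans (hc₂m.trans hc₃0.symm))
      hc12_step hc₃step' hc12_P hP3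
  rw [hc12_0, hc₁0] at hc0
  rw [hc₃m] at hcm
  set n := m₁ + m₂ + m₃ with hn
  -- restricted geodesic
  have hγ' := geod_restrict hγ hsumem hswmem (hsus₀.trans hs₀sw)
  have hdist_susw : dist (γ su) (γ sw) = sw - su := by
    rw [hγ.2.2 su hsumem sw hswmem, abs_of_nonpos (by linarith), neg_sub]
  have hs₀mem' : s₀ - su ∈ Set.Icc 0 (dist (γ su) (γ sw)) := by
    rw [hdist_susw]; exact ⟨by linarith, by linarith⟩
  set k := Nat.clog 2 n with hk
  obtain ⟨i, hi, hdi⟩ := chain_log hδ hG hSl hgap0 k n (Nat.le_pow_clog (by norm_num) n)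
    c (γ su) (γ sw) _ hγ' hc0 hcm hcstep (s₀ - su) hs₀mem'
  have hdi' : dist g (c i) ≤ δ * k + gap := by
    have e : su + (s₀ - su) = s₀ := by ring
    simpa only [e, ← hgdef] using hdi
  have hDk : D - 1 ≤ δ * k + gap := le_trans (hcP i hi) hdi'
  -- count bound
  have h_ab : |b - a| ≤ lam * (6*D + 2 + eps) := by
    have hq := (hqg a haI b hbI).1
    have hdistab : dist (p a) (p b) ≤ 6*D + 2 := by
      have t1 := dist_triangle (p a) (γ su) (p b)
      have t2 := dist_triangle (γ su) (γ sw) (p b)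
      have hda' : dist (p a) (γ su) ≤ D + 1 := by rw [dist_comm, ← hd₁]; exact hda
      have hdb' : dist (γ sw) (p b) ≤ D + 1 := hdb
      have : dist (γ su) (γ sw) ≤ 4*D := by rw [hdist_susw]; linarith
      linarith
    have : |a - b| / lam ≤ dist (p a) (p b) + eps := by linarith
    rw [div_le_iff₀ hlam] at this
    calc |b - a| = |a - b| := abs_sub_comm b a
      _ ≤ (dist (p a) (p b) + eps) * lam := this
      _ ≤ lam * (6*D + 2 + eps) := by nlinarith
  have hcount : (n:ℝ) ≤ (6*lam+2) * D + (lam*(2+eps)+5) := by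
    push_cast [hn]
    have e1 : (m₁:ℝ) ≤ D + 2 := by
      refine le_trans hm₁le ?_
      rw [sub_zero, abs_of_nonneg hd₁0]; linarith
    have e3 : (m₃:ℝ) ≤ D + 2 := by
      refine le_trans hm₃le ?_
      rw [sub_zero, abs_of_nonneg hd₃0]
      have : d₃ ≤ D + 1 := by rw [hd₃, dist_comm]; exact hdb
      linarith
    have e2 : (m₂:ℝ) ≤ lam * (6*D + 2 + eps) + 1 := by
      refine le_trans hm₂le ?_; linarith
    have expand : (D+2) + (lam * (6*D+2+eps) + 1) + (D+2) = (6*lam+2)*D + (lam*(2+eps)+5) := by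
      ring
    linarith
  -- solve
  by_cases hn1 : n ≤ 1
  · have hk0 : k = 0 := by
      rw [hk]
      rcases Nat.le_one_iff_eq_zero_or_eq_one.mp hn1 with h | h <;> rw [h] <;> simp
    rw [hk0] at hDk
    simp only [Nat.cast_zero, mul_zero, zero_add] at hDk
    have := (morseR_big (δ := δ) hδ hlam heps).1
    rw [hgapdef] at hDk
    linarith
  · push_neg at hn1
    have hk1 : 1 ≤ k := by
      rw [hk]
      have := Nat.clog_pos (b := 2) (n := n) (by norm_num) hn1
      omega
    have hpow : 2 ^ (k - 1) < n := Nat.pow_pred_clog_lt_self (by norm_num) hn1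
    have hpowR : (2:ℝ) ^ ((k:ℝ) - 1) ≤ (n:ℝ) := by
      have : ((2:ℕ) ^ (k-1) : ℝ) < (n:ℝ) := by exact_mod_cast hpow
      rw [show (k:ℝ) - 1 = ((k - 1 : ℕ):ℝ) by
        push_cast [Nat.cast_sub hk1]; ring]
      rw [Real.rpow_natCast]
      push_cast at this ⊢
      linarith
    have hlogn : ((k:ℝ) - 1) * Real.log 2 ≤ Real.log n := by
      have h2 : Real.log ((2:ℝ) ^ ((k:ℝ)-1)) ≤ Real.log n :=
        Real.log_le_log (by positivity) hpowR
      rwa [Real.log_rpow (by norm_num)] at h2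
    have hlogmono : Real.log n ≤ Real.log ((6*lam+2) * D + (lam*(2+eps)+5)) :=
      Real.log_le_log (by exact_mod_cast Nat.pos_of_ne_zero (by omega)) hcount
    have hprod1 : 0 ≤ (6*lam+2)*D := mul_nonneg (by linarith) hD0
    have hprod2 : 0 ≤ lam*eps := mul_nonneg hlam.le heps
    have hexp : lam*(2+eps) = 2*lam + lam*eps := by ring
    have hLg0 : 0 ≤ Real.log ((6*lam+2) * D + (lam*(2+eps)+5)) := by
      apply Real.log_nonneg; linarith
    have hkn : (0:ℝ) ≤ (k:ℝ) - 1 := by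
      have : (1:ℝ) ≤ (k:ℝ) := by exact_mod_cast hk1
      linarith
    have hl2 : (0.6931471803:ℝ) < Real.log 2 := Real.log_two_gt_d9
    have hAlog : ((k:ℝ) - 1) * 0.6931471803 ≤ ((k:ℝ) - 1) * Real.log 2 :=
      mul_le_mul_of_nonneg_left hl2.le hkn
    have hkb : (k:ℝ) ≤ 2 * Real.log ((6*lam+2) * D + (lam*(2+eps)+5)) + 1 := by
      nlinarith [hlogn, hlogmono, hAlog, hkn]
    have hfinal : D ≤ (2*δ) * Real.log ((6*lam+2) * D + (lam*(2+eps)+5)) + (δ + lam + eps + 2) := by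
      have hmul : δ * (k:ℝ) ≤ δ * (2 * Real.log ((6*lam+2) * D + (lam*(2+eps)+5)) + 1) :=
        mul_le_mul_of_nonneg_left hkb hδ
      have hexp2 : δ * (2 * Real.log ((6*lam+2) * D + (lam*(2+eps)+5)) + 1)
          = (2*δ) * Real.log ((6*lam+2) * D + (lam*(2+eps)+5)) + δ := by ring
      rw [hgapdef] at hDk
      linarith
    have := solve_log hD0 (by linarith : (0:ℝ) ≤ 2*δ) (by linarith : (0:ℝ) ≤ 6*lam+2)
      (by linarith : (1:ℝ) ≤ lam*(2+eps)+5) (by linarith : (0:ℝ) ≤ δ+lam+eps+2) hfinal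
    rw [morseR]
    linarith

end Morse1

section Morse2
variable {X : Type*} [MetricSpace X]

noncomputable def morseR2 (δ lam eps : ℝ) : ℝ :=
  lam*(lam*(2*(morseR δ lam eps + 1)+2+eps)) + eps + (morseR δ lam eps + 1)

lemma morseR2_nonneg {δ lam eps : ℝ} (hδ : 0 ≤ δ) (hlam : 0 < lam) (heps : 0 ≤ eps) :
    0 ≤ morseR2 δ lam eps := by
  have h := (morseR_big (δ := δ) hδ hlam heps).2
  unfold morseR2
  positivity

lemma qg_near_geod {δ lam eps : ℝ} (hδ : 0 ≤ δ) (hlam : 0 < lam) (heps : 0 ≤ eps)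
    (hG : GeodesicSpace X) (hSl : SlimTriangles X δ)
    {p : ℝ → X} {S : ℝ} (hS0 : 0 ≤ S) (hqg : IsQGOn lam eps p (Set.Icc 0 S))
    {γ : ℝ → X} (hγ : GeodFromTo γ (p 0) (p S)) :
    ∀ t ∈ Set.Icc 0 S, ∃ s ∈ Set.Icc 0 (dist (p 0) (p S)),
      dist (p t) (γ s) ≤ morseR2 δ lam eps := by
  intro t ht
  have hR0 := (morseR_big (δ := δ) hδ hlam heps).2
  set R₁ : ℝ := morseR δ lam eps + 1 with hR₁
  have hR₁0 : 0 ≤ R₁ := by rw [hR₁]; linarith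
  set L := dist (p 0) (p S) with hL
  have hL0 : 0 ≤ L := dist_nonneg
  set A : Set ℝ := {s : ℝ | s ∈ Set.Icc 0 L ∧ ∃ a ∈ Set.Icc 0 t, dist (γ s) (p a) ≤ R₁} with hA
  have h0A : (0:ℝ) ∈ A := by
    refine ⟨⟨le_rfl, hL0⟩, 0, ⟨le_rfl, ht.1⟩, ?_⟩
    rw [hγ.1, dist_self]; exact hR₁0
  have hAne : A.Nonempty := ⟨0, h0A⟩
  have hABdd : BddAbove A := ⟨L, fun s hs => hs.1.2⟩
  set sstar := sSup A with hsstar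
  have hsmem : sstar ∈ Set.Icc 0 L :=
    ⟨le_csSup hABdd h0A, csSup_le hAne fun s hs => hs.1.2⟩
  obtain ⟨s₁, hs₁A, hs₁gt⟩ : ∃ s ∈ A, sstar - 1 < s :=
    exists_lt_of_lt_csSup hAne (by linarith)
  have hs₁le : s₁ ≤ sstar := le_csSup hABdd hs₁A
  have hs₁mem : s₁ ∈ Set.Icc 0 L := hs₁A.1
  obtain ⟨a, hat, hda⟩ := hs₁A.2
  have hupper : ∃ s₂ ∈ Set.Icc 0 L, s₂ ≤ sstar + 1 ∧ sstar ≤ s₂ ∧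
      ∃ b ∈ Set.Icc t S, dist (γ s₂) (p b) ≤ R₁ := by
    by_cases hLs : sstar = L
    · refine ⟨L, ⟨hL0, le_rfl⟩, by rw [← hLs]; linarith, by rw [← hLs], S, ⟨ht.2, le_rfl⟩, ?_⟩
      rw [hγ.2.1, dist_self]; exact hR₁0
    · set s₂ := min (sstar + 1) L with hs₂
      have hmem : s₂ ∈ Set.Icc 0 L := ⟨le_min (by linarith [hsmem.1]) hL0, min_le_right _ _⟩
      have hgt : sstar < s₂ := lt_min (by linarith) (lt_of_le_of_ne hsmem.2 hLs)
      have hid := geod_near_qg hδ hlam heps hG hSl hS0 hqg hγ s₂ hmem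
      have hlt : Metric.infDist (γ s₂) (p '' Set.Icc 0 S) < R₁ := by rw [hR₁]; linarith
      obtain ⟨z, hzE, hdzb⟩ :=
        (Metric.infDist_lt_iff (s := p '' Set.Icc 0 S) ⟨p 0, 0, ⟨le_rfl, hS0⟩, rfl⟩).mp hlt
      obtain ⟨b, hbI, rfl⟩ := hzE
      by_cases hbt : b ≤ t
      · exact absurd (le_csSup hABdd ⟨hmem, b, ⟨hbI.1, hbt⟩, hdzb.le⟩) (not_le.mpr hgt)
      · push_neg at hbt
        exact ⟨s₂, hmem, min_le_left _ _, hgt.le, b, ⟨hbt.le, hbI.2⟩, hdzb.le⟩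
  obtain ⟨s₂, hs₂mem, hs₂le, hs₂ge, b, hbtS, hdb⟩ := hupper
  have hss : dist (γ s₁) (γ s₂) ≤ 2 := by
    rw [hγ.2.2 s₁ hs₁mem s₂ hs₂mem]
    rw [abs_le]; constructor <;> linarith
  have haIS : a ∈ Set.Icc 0 S := ⟨hat.1, le_trans hat.2 ht.2⟩
  have hbIS : b ∈ Set.Icc 0 S := ⟨le_trans ht.1 hbtS.1, hbtS.2⟩
  have hpab : dist (p a) (p b) ≤ 2*R₁ + 2 := by
    calc dist (p a) (p b) ≤ dist (p a) (γ s₁) + dist (γ s₁) (γ s₂) + dist (γ s₂) (p b) :=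
          dist_triangle4 _ _ _ _
      _ ≤ R₁ + 2 + R₁ := by
          rw [dist_comm (p a) (γ s₁)]
          exact add_le_add (add_le_add hda hss) hdb
      _ = 2*R₁ + 2 := by ring
  have hab : |a - b| ≤ lam * (2*R₁ + 2 + eps) := by
    have hq := (hqg a haIS b hbIS).1
    have : |a - b| / lam ≤ 2*R₁ + 2 + eps := by linarith
    rw [div_le_iff₀ hlam] at this
    calc |a - b| ≤ (2*R₁ + 2 + eps) * lam := this
      _ = lam * (2*R₁ + 2 + eps) := by ring
  have hta : |t - a| ≤ lam * (2*R₁ + 2 + eps) := by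
    have h1 : a ≤ t := hat.2
    have h2 : t ≤ b := hbtS.1
    have h3 : |a - b| = b - a := by rw [abs_of_nonpos (by linarith), neg_sub]
    rw [abs_of_nonneg (by linarith)]
    rw [h3] at hab
    linarith
  have hdpta : dist (p t) (p a) ≤ lam * (lam * (2*R₁ + 2 + eps)) + eps := by
    have := (hqg t ⟨ht.1, ht.2⟩ a haIS).2
    have h2 : lam * |t - a| ≤ lam * (lam * (2*R₁+2+eps)) := mul_le_mul_of_nonneg_left hta hlam.le
    linarith
  refine ⟨s₁, hs₁mem, ?_⟩
  calc dist (p t) (γ s₁) ≤ dist (p t) (p a) + dist (p a) (γ s₁) := dist_triangle _ _ _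
    _ ≤ (lam * (lam * (2*R₁ + 2 + eps)) + eps) + R₁ := by
        rw [dist_comm (p a) (γ s₁)]
        exact add_le_add hdpta hda
    _ = morseR2 δ lam eps := by rw [morseR2, hR₁]

lemma geod_near_geod {δ H₀ : ℝ} (hδ : 0 ≤ δ) (hH : 0 ≤ H₀)
    (hG : GeodesicSpace X) (hSl : SlimTriangles X δ)
    {γ γ' : ℝ → X} {P₁ P₂ Q₁ Q₂ : X}
    (hγ : GeodFromTo γ P₁ P₂) (hγ' : GeodFromTo γ' Q₁ Q₂)
    (h1 : dist P₁ Q₁ ≤ H₀) (h2 : dist P₂ Q₂ ≤ H₀) :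
    ∀ s ∈ Set.Icc 0 (dist P₁ P₂), ∃ s' ∈ Set.Icc 0 (dist Q₁ Q₂),
      dist (γ s) (γ' s') ≤ 2*δ + H₀ := by
  intro s hs
  obtain ⟨g1, hg1⟩ := hG P₂ Q₂
  obtain ⟨g2, hg2⟩ := hG P₁ Q₂
  have hinf := hSl P₁ P₂ Q₂ γ g1 g2 hγ hg1 hg2 s hs
  obtain ⟨z, hz, hdz⟩ := near_of_infDist (hg1.compactImage.union hg2.compactImage)
    (hg1.nonemptyImage.mono Set.subset_union_left) hinf
  rcases hz with ⟨r₁, hr₁, rfl⟩ | ⟨r₂, hr₂, rfl⟩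
  · have hdq : dist (g1 r₁) Q₂ ≤ H₀ := by
      rw [← hg1.2.1, hg1.2.2 r₁ hr₁ _ ⟨dist_nonneg, le_rfl⟩]
      rw [abs_of_nonpos (by linarith [hr₁.2])]
      linarith [hr₁.1, h2]
    refine ⟨dist Q₁ Q₂, ⟨dist_nonneg, le_rfl⟩, ?_⟩
    rw [hγ'.2.1]
    calc dist (γ s) Q₂ ≤ dist (γ s) (g1 r₁) + dist (g1 r₁) Q₂ := dist_triangle _ _ _
      _ ≤ δ + H₀ := add_le_add hdz hdq
      _ ≤ 2*δ + H₀ := by linarith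
  · obtain ⟨g3, hg3⟩ := hG P₁ Q₁
    have hrev := geod_reverse hγ'
    have hinf2 := hSl P₁ Q₂ Q₁ g2 (fun u => γ' (dist Q₁ Q₂ - u)) g3 hg2 hrev hg3 r₂ hr₂
    obtain ⟨z₂, hz₂, hdz₂⟩ := near_of_infDist (hrev.compactImage.union hg3.compactImage)
      (hrev.nonemptyImage.mono Set.subset_union_left) hinf2
    rcases hz₂ with ⟨r₃, hr₃, rfl⟩ | ⟨r₄, hr₄, rfl⟩
    · have hr₃' : r₃ ∈ Set.Icc 0 (dist Q₁ Q₂) := by rwa [dist_comm Q₂ Q₁] at hr₃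
      refine ⟨dist Q₁ Q₂ - r₃, ⟨by linarith [hr₃'.2], by linarith [hr₃'.1]⟩, ?_⟩
      calc dist (γ s) (γ' (dist Q₁ Q₂ - r₃))
          ≤ dist (γ s) (g2 r₂) + dist (g2 r₂) (γ' (dist Q₁ Q₂ - r₃)) := dist_triangle _ _ _
        _ ≤ δ + δ := add_le_add hdz hdz₂
        _ ≤ 2*δ + H₀ := by linarith
    · have hdq : dist (g3 r₄) Q₁ ≤ H₀ := by
        rw [← hg3.2.1, hg3.2.2 r₄ hr₄ _ ⟨dist_nonneg, le_rfl⟩]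
        rw [abs_of_nonpos (by linarith [hr₄.2])]
        linarith [hr₄.1, h1]
      refine ⟨0, ⟨le_rfl, dist_nonneg⟩, ?_⟩
      rw [hγ'.1]
      calc dist (γ s) Q₁ ≤ dist (γ s) (g2 r₂) + dist (g2 r₂) (g3 r₄) + dist (g3 r₄) Q₁ :=
            dist_triangle4 _ _ _ _
        _ ≤ δ + δ + H₀ := add_le_add (add_le_add hdz hdz₂) hdq
        _ = 2*δ + H₀ := by ring

noncomputable def fellowK1 (δ lam eps H₀ : ℝ) : ℝ :=
  morseR2 δ lam eps + (2*δ + H₀) + (morseR δ lam eps + 1)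

lemma fellowK1_geH {δ lam eps H₀ : ℝ} (hδ : 0 ≤ δ) (hlam : 0 < lam) (heps : 0 ≤ eps)
    (hH : 0 ≤ H₀) : H₀ ≤ fellowK1 δ lam eps H₀ := by
  have h1 := morseR2_nonneg (δ := δ) hδ hlam heps
  have h2 := (morseR_big (δ := δ) hδ hlam heps).2
  unfold fellowK1; linarith

/-- every point of `q` is `K₁`-close to a point of `p`. -/
lemma qg_near_qg {δ lam eps H₀ : ℝ} (hδ : 0 ≤ δ) (hlam : 0 < lam) (heps : 0 ≤ eps)
    (hH : 0 ≤ H₀) (hG : GeodesicSpace X) (hSl : SlimTriangles X δ)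
    {p q : ℝ → X} {S T : ℝ} (hS0 : 0 ≤ S) (hT0 : 0 ≤ T)
    (hqgp : IsQGOn lam eps p (Set.Icc 0 S)) (hqgq : IsQGOn lam eps q (Set.Icc 0 T))
    (h1 : dist (p 0) (q 0) ≤ H₀) (h2 : dist (p S) (q T) ≤ H₀) :
    ∀ v ∈ Set.Icc 0 T, ∃ t ∈ Set.Icc 0 S, dist (p t) (q v) ≤ fellowK1 δ lam eps H₀ := by
  intro v hv
  obtain ⟨γp, hγp⟩ := hG (p 0) (p S)
  obtain ⟨γq, hγq⟩ := hG (q 0) (q T)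
  obtain ⟨s', hs', hd1⟩ := qg_near_geod hδ hlam heps hG hSl hT0 hqgq hγq v hv
  obtain ⟨s'', hs'', hd2⟩ := geod_near_geod hδ hH hG hSl hγq hγp
    (by rwa [dist_comm]) (by rwa [dist_comm]) s' hs'
  have hid := geod_near_qg hδ hlam heps hG hSl hS0 hqgp hγp s'' hs''
  have hlt : Metric.infDist (γp s'') (p '' Set.Icc 0 S) < morseR δ lam eps + 1 := by linarith
  obtain ⟨z, hzE, hdz⟩ :=
    (Metric.infDist_lt_iff (s := p '' Set.Icc 0 S) ⟨p 0, 0, ⟨le_rfl, hS0⟩, rfl⟩).mp hlt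
  obtain ⟨t, htI, rfl⟩ := hzE
  refine ⟨t, htI, ?_⟩
  calc dist (p t) (q v)
      ≤ dist (p t) (γp s'') + dist (γp s'') (γq s') + dist (γq s') (q v) := dist_triangle4 _ _ _ _
    _ ≤ (morseR δ lam eps + 1) + (2*δ + H₀) + morseR2 δ lam eps := by
        rw [dist_comm (p t) (γp s''), dist_comm (γp s'') (γq s'), dist_comm (γq s') (q v)]
        exact add_le_add (add_le_add hdz.le hd2) hd1
    _ = fellowK1 δ lam eps H₀ := by rw [fellowK1]; ring

end Morse2

section PL

noncomputable def clamp01 (t : ℝ) : ℝ := min (max t 0) 1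

lemma clamp01_mono : Monotone clamp01 :=
  fun _ _ h => min_le_min (max_le_max h le_rfl) le_rfl

lemma clamp01_continuous : Continuous clamp01 :=
  ((continuous_id.max continuous_const).min continuous_const)

lemma clamp01_nonneg (t : ℝ) : 0 ≤ clamp01 t := le_min (le_max_right _ _) zero_le_one

lemma clamp01_le_one (t : ℝ) : clamp01 t ≤ 1 := min_le_right _ _

lemma clamp01_of_nonpos {t : ℝ} (h : t ≤ 0) : clamp01 t = 0 := by
  unfold clamp01; rw [max_eq_right h, min_eq_left zero_le_one]

lemma clamp01_of_one_le {t : ℝ} (h : 1 ≤ t) : clamp01 t = 1 := by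
  unfold clamp01; rw [max_eq_left (by linarith), min_eq_right h]

noncomputable def pl (x : ℕ → ℝ) (n : ℕ) (t : ℝ) : ℝ :=
  x 0 + (∑ k ∈ Finset.range n, (x (k+1) - x k) * clamp01 (t - k)) + max (t - n) 0

lemma pl_monotone {x : ℕ → ℝ} {n : ℕ} (hx : ∀ k < n, x k ≤ x (k+1)) :
    Monotone (pl x n) := by
  intro t₁ t₂ h
  unfold pl
  refine add_le_add (add_le_add le_rfl ?_) (max_le_max (by linarith) le_rfl)
  refine Finset.sum_le_sum fun k hk => ?_
  exact mul_le_mul_of_nonneg_left (clamp01_mono (by linarith))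
    (sub_nonneg.mpr (hx k (Finset.mem_range.mp hk)))

lemma pl_continuous (x : ℕ → ℝ) (n : ℕ) : Continuous (pl x n) := by
  unfold pl
  apply Continuous.add
  apply Continuous.add continuous_const
  · exact continuous_finset_sum _ fun k _ =>
      continuous_const.mul (clamp01_continuous.comp (continuous_id.sub continuous_const))
  · exact (continuous_id.sub continuous_const).max continuous_const

end PL

lemma pl_nat (x : ℕ → ℝ) {n j : ℕ} (hj : j ≤ n) : pl x n (j : ℝ) = x j := by
  unfold pl
  have hterm : ∀ k ∈ Finset.range n,
      (x (k+1) - x k) * clamp01 ((j:ℝ) - k) = if k < j then x (k+1) - x k else 0 := by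
    intro k _
    by_cases hkj : k < j
    · rw [if_pos hkj, clamp01_of_one_le, mul_one]
      have : (k:ℝ) + 1 ≤ (j:ℝ) := by exact_mod_cast hkj
      linarith
    · rw [if_neg hkj, clamp01_of_nonpos, mul_zero]
      push_neg at hkj
      have : (j:ℝ) ≤ (k:ℝ) := by exact_mod_cast hkj
      linarith
  rw [Finset.sum_congr rfl hterm]
  rw [← Finset.sum_subset (Finset.range_subset_range.mpr hj)
    (fun k _ hks => if_neg (by simpa using hks))]
  rw [Finset.sum_congr rfl (fun k hk => if_pos (Finset.mem_range.mp hk))]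
  rw [Finset.sum_range_sub x j]
  have : (j:ℝ) - n ≤ 0 := by
    have : (j:ℝ) ≤ (n:ℝ) := by exact_mod_cast hj
    linarith
  rw [max_eq_right this]
  ring

lemma pl_tail (x : ℕ → ℝ) (n : ℕ) {t : ℝ} (ht : (n:ℝ) ≤ t) :
    pl x n t = x n + (t - n) := by
  unfold pl
  have hterm : ∀ k ∈ Finset.range n,
      (x (k+1) - x k) * clamp01 (t - k) = x (k+1) - x k := by
    intro k hk
    rw [clamp01_of_one_le, mul_one]
    have : (k:ℝ) + 1 ≤ (n:ℝ) := by exact_mod_cast Finset.mem_range.mp hk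
    linarith
  rw [Finset.sum_congr rfl hterm, Finset.sum_range_sub x n, max_eq_left (by linarith)]
  ring

lemma pl_ge {x : ℕ → ℝ} {n : ℕ} (hx : ∀ k < n, x k ≤ x (k+1)) (t : ℝ) :
    x 0 + (t - n) ≤ pl x n t := by
  unfold pl
  have hsum : 0 ≤ ∑ k ∈ Finset.range n, (x (k+1) - x k) * clamp01 (t - k) :=
    Finset.sum_nonneg fun k hk =>
      mul_nonneg (sub_nonneg.mpr (hx k (Finset.mem_range.mp hk))) (clamp01_nonneg _)
  have hmax : t - n ≤ max (t - n) 0 := le_max_left _ _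
  linarith

lemma pl_tendsto {x : ℕ → ℝ} {n : ℕ} (hx : ∀ k < n, x k ≤ x (k+1)) :
    Filter.Tendsto (pl x n) Filter.atTop Filter.atTop := by
  apply Filter.tendsto_atTop_mono (pl_ge hx)
  have h1 : Filter.Tendsto (fun t : ℝ => t + (x 0 - n)) Filter.atTop Filter.atTop :=
    Filter.tendsto_atTop_add_const_right _ _ Filter.tendsto_id
  have : (fun t : ℝ => x 0 + (t - n)) = fun t : ℝ => t + (x 0 - n) := by
    funext t; ring
  rw [this]
  exact h1

noncomputable def fellowK2 (δ lam eps H₀ : ℝ) : ℝ :=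
  lam*(lam*(2*fellowK1 δ lam eps H₀ + 2*lam + 2*eps)) + eps + fellowK1 δ lam eps H₀ + lam + eps

noncomputable def fellowK3 (δ lam eps H₀ : ℝ) : ℝ :=
  lam + eps + fellowK2 δ lam eps H₀ + lam*(lam*(2*fellowK2 δ lam eps H₀ + lam + 2*eps)) + eps

set_option maxHeartbeats 2000000 in
set_option maxHeartbeats 2000000 in
/-- In a `δ`-hyperbolic geodesic metric space, two
`(λ,ε)`-quasigeodesics `p` from `P₁` to `P₂` and `q` from `Q₁` to `Q₂` with
`dist P₁ Q₁ ≤ H₀` and `dist P₂ Q₂ ≤ H₀` asynchronously `K`-fellow travel, where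
`K = K(δ,λ,ε,H₀) ≥ 0` depends only on `δ, λ, ε, H₀`. -/
theorem async_fellow_travel_of_quasigeodesics_with_close_endpoints :
    ∃ K : ℝ → ℝ → ℝ → ℝ → ℝ,
      (∀ δ lam eps H₀ : ℝ, 0 ≤ K δ lam eps H₀) ∧
      ∀ (X : Type) [MetricSpace X], ∀ δ lam eps H₀ : ℝ,
        0 ≤ δ → 0 < lam → 0 ≤ eps → 0 ≤ H₀ →
        GeodesicSpace X → SlimTriangles X δ →
        ∀ (p q : ℝ → X) (P₁ P₂ Q₁ Q₂ : X) (S T : ℝ), 0 ≤ S → 0 ≤ T →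
          p 0 = P₁ → p S = P₂ → IsQGOn lam eps p (Set.Icc 0 S) → IsPathOn p S →
          q 0 = Q₁ → q T = Q₂ → IsQGOn lam eps q (Set.Icc 0 T) → IsPathOn q T →
          dist P₁ Q₁ ≤ H₀ → dist P₂ Q₂ ≤ H₀ →
          AsyncFellowTravel (K δ lam eps H₀) p q := by
  classical
  refine ⟨fun δ lam eps H₀ => max 0 (fellowK3 δ lam eps H₀),
    fun _ _ _ _ => le_max_left _ _, ?_⟩
  intro X _ δ lam eps H₀ hδ hlam heps hH hG hSl p q P₁ P₂ Q₁ Q₂ S T hS0 hT0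
    hp0 hpS hqgp hpathp hq0 hqT hqgq hpathq h1 h2
  subst hp0; subst hpS; subst hq0; subst hqT
  set K₁ := fellowK1 δ lam eps H₀ with hK₁
  set K₂ := fellowK2 δ lam eps H₀ with hK₂
  set K₃ := fellowK3 δ lam eps H₀ with hK₃def
  have hK₁H : H₀ ≤ K₁ := fellowK1_geH hδ hlam heps hH
  have hK₁0 : 0 ≤ K₁ := le_trans hH hK₁H
  have hpos1 : 0 ≤ lam*(lam*(2*K₁+2*lam+2*eps)) :=
    mul_nonneg hlam.le (mul_nonneg hlam.le (by linarith))
  have hK₂K₁ : K₁ ≤ K₂ := by rw [hK₂, fellowK2, ← hK₁]; linarith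
  have hK₂0 : 0 ≤ K₂ := le_trans hK₁0 hK₂K₁
  have hGnn : 0 ≤ lam*(2*K₂+lam+2*eps) := mul_nonneg hlam.le (by linarith)
  have hpos2 : 0 ≤ lam*(lam*(2*K₂+lam+2*eps)) := mul_nonneg hlam.le hGnn
  have hK₃K₂ : K₂ ≤ K₃ := by rw [hK₃def, fellowK3, ← hK₂]; linarith
  have hK₃max : K₃ ≤ max 0 K₃ := le_max_right _ _
  have hnear := qg_near_qg hδ hlam heps hH hG hSl hS0 hT0 hqgp hqgq h1 h2
  set N := Nat.ceil S with hN
  set tmin : ℕ → ℝ := fun i => min (i:ℝ) S with htmin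
  have htmin_mem : ∀ i, tmin i ∈ Set.Icc 0 S :=
    fun i => ⟨le_min (Nat.cast_nonneg i) hS0, min_le_right _ _⟩
  have htmin_mono : ∀ i j, i ≤ j → tmin i ≤ tmin j :=
    fun i j h => min_le_min (Nat.cast_le.mpr h) le_rfl
  have htmin_diff : ∀ i, tmin (i+1) ≤ tmin i + 1 := by
    intro i
    simp only [htmin]
    rcases le_total S (i:ℝ) with h | h
    · rw [min_eq_right h, min_eq_right (by push_cast; linarith)]
      linarith
    · rw [min_eq_left h]
      refine le_trans (min_le_left _ _) ?_
      push_cast; linarith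
  have htminN : tmin N = S := min_eq_right (Nat.le_ceil S)
  set A : ℕ → Set ℝ := fun i =>
    {v | v ∈ Set.Icc 0 T ∧ ∃ t' ∈ Set.Icc 0 (tmin i), dist (p t') (q v) ≤ K₁} with hA
  have hA0 : ∀ i, (0:ℝ) ∈ A i :=
    fun i => ⟨⟨le_rfl, hT0⟩, 0, ⟨le_rfl, (htmin_mem i).1⟩, le_trans h1 hK₁H⟩
  have hAbdd : ∀ i, BddAbove (A i) := fun i => ⟨T, fun v hv => hv.1.2⟩
  set umax : ℕ → ℝ := fun i => sSup (A i) with humax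
  have hu_mem : ∀ i, umax i ∈ Set.Icc 0 T :=
    fun i => ⟨le_csSup (hAbdd i) (hA0 i), csSup_le ⟨0, hA0 i⟩ fun v hv => hv.1.2⟩
  have hu_mono : ∀ i j, i ≤ j → umax i ≤ umax j := by
    intro i j h
    apply csSup_le_csSup (hAbdd j) ⟨0, hA0 i⟩
    rintro v ⟨hv1, t', ht', hd⟩
    exact ⟨hv1, t', ⟨ht'.1, le_trans ht'.2 (htmin_mono i j h)⟩, hd⟩
  have huN : umax N = T := by
    refine le_antisymm (csSup_le ⟨0, hA0 N⟩ fun v hv => hv.1.2) ?_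
    exact le_csSup (hAbdd N) ⟨⟨hT0, le_rfl⟩, S, ⟨hS0, htminN ▸ le_rfl⟩, le_trans h2 hK₁H⟩
  -- key estimate E1
  have hE1 : ∀ i, dist (p (tmin i)) (q (umax i)) ≤ K₂ := by
    intro i
    have hup : ∃ u', u' ∈ Set.Icc 0 T ∧ umax i ≤ u' ∧ u' ≤ umax i + 1 ∧
        ∃ tp, tp ∈ Set.Icc 0 S ∧ tmin i ≤ tp ∧ dist (p tp) (q u') ≤ K₁ := by
      by_cases hiT : umax i = T
      · refine ⟨T, ⟨hT0, le_rfl⟩, le_of_eq hiT, by rw [hiT]; linarith, S, ⟨hS0, le_rfl⟩,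
          (htmin_mem i).2, le_trans h2 hK₁H⟩
      · have hlt : umax i < T := lt_of_le_of_ne (hu_mem i).2 hiT
        refine ⟨min (umax i + 1/2) T, ⟨le_min (by linarith [(hu_mem i).1]) hT0, min_le_right _ _⟩,
          ?_, ?_, ?_⟩
        · exact (lt_min (by linarith) hlt).le
        · exact le_trans (min_le_left _ _) (by linarith)
        · obtain ⟨t', ht'I, hd⟩ := hnear (min (umax i + 1/2) T)
            ⟨le_min (by linarith [(hu_mem i).1]) hT0, min_le_right _ _⟩
          by_cases htt : t' ≤ tmin i
          · exact absurd
              (le_csSup (hAbdd i) ⟨⟨le_min (by linarith [(hu_mem i).1]) hT0, min_le_right _ _⟩,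
                t', ⟨ht'I.1, htt⟩, hd⟩)
              (not_le.mpr (lt_min (by linarith) hlt))
          · push_neg at htt
            exact ⟨t', ht'I, htt.le, hd⟩
    obtain ⟨u', hu'mem, hu'ge, hu'le, tp, htpI, htpge, hdp⟩ := hup
    obtain ⟨um, humA, humgt⟩ : ∃ u ∈ A i, umax i - 1 < u :=
      exists_lt_of_lt_csSup ⟨0, hA0 i⟩ (by linarith)
    have humle : um ≤ umax i := le_csSup (hAbdd i) humA
    obtain ⟨hummem, tm, htmI, hdm⟩ := humA
    have htmS : tm ∈ Set.Icc 0 S := ⟨htmI.1, le_trans htmI.2 (htmin_mem i).2⟩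
    have hqq' : dist (q um) (q u') ≤ lam*2 + eps := by
      have hb := (hqgq um hummem u' hu'mem).2
      have habs : |um - u'| ≤ 2 := abs_le.mpr ⟨by linarith, by linarith⟩
      have := mul_le_mul_of_nonneg_left habs hlam.le
      linarith
    have hpp : dist (p tm) (p tp) ≤ 2*K₁ + 2*lam + eps := by
      calc dist (p tm) (p tp)
          ≤ dist (p tm) (q um) + dist (q um) (q u') + dist (q u') (p tp) :=
            dist_triangle4 _ _ _ _
        _ ≤ K₁ + (lam*2+eps) + K₁ := by
            refine add_le_add (add_le_add hdm hqq') ?_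
            rw [dist_comm]; exact hdp
        _ = 2*K₁ + 2*lam + eps := by ring
    have htt' : |tm - tp| ≤ lam*(2*K₁ + 2*lam + 2*eps) := by
      have hlo := (hqgp tm htmS tp htpI).1
      have h' : |tm - tp| / lam ≤ 2*K₁+2*lam+eps + eps := by linarith
      rw [div_le_iff₀ hlam] at h'
      have : (2*K₁+2*lam+eps+eps)*lam = lam*(2*K₁+2*lam+2*eps) := by ring
      linarith
    have htmid : tmin i - tm ≤ lam*(2*K₁+2*lam+2*eps) := by
      rw [abs_of_nonpos (by linarith [htmI.2, htpge]), neg_sub] at htt'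
      linarith [htmI.2, htpge]
    have hptm : dist (p (tmin i)) (p tm) ≤ lam*(lam*(2*K₁+2*lam+2*eps)) + eps := by
      have hb := (hqgp (tmin i) (htmin_mem i) tm htmS).2
      have habs : |tmin i - tm| ≤ lam*(2*K₁+2*lam+2*eps) := by
        rw [abs_of_nonneg (by linarith [htmI.2])]; exact htmid
      have := mul_le_mul_of_nonneg_left habs hlam.le
      linarith
    have hqmid : dist (q um) (q (umax i)) ≤ lam + eps := by
      have hb := (hqgq um hummem (umax i) (hu_mem i)).2
      have habs : |um - umax i| ≤ 1 := abs_le.mpr ⟨by linarith, by linarith⟩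
      have := mul_le_mul_of_nonneg_left habs hlam.le
      linarith
    calc dist (p (tmin i)) (q (umax i))
        ≤ dist (p (tmin i)) (p tm) + dist (p tm) (q um) + dist (q um) (q (umax i)) :=
          dist_triangle4 _ _ _ _
      _ ≤ (lam*(lam*(2*K₁+2*lam+2*eps)) + eps) + K₁ + (lam + eps) :=
          add_le_add (add_le_add hptm hdm) hqmid
      _ = K₂ := by rw [hK₂, fellowK2, ← hK₁]; ring
  -- step bound for p
  have hppstep : ∀ i, dist (p (tmin i)) (p (tmin (i+1))) ≤ lam + eps := by
    intro i
    have hb := (hqgp (tmin i) (htmin_mem i) (tmin (i+1)) (htmin_mem (i+1))).2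
    have habs : |tmin i - tmin (i+1)| ≤ 1 :=
      abs_le.mpr ⟨by linarith [htmin_diff i], by linarith [htmin_mono i (i+1) (by omega)]⟩
    have := mul_le_mul_of_nonneg_left habs hlam.le
    linarith
  -- E2
  have hE2 : ∀ i, umax (i+1) ≤ umax i + lam*(2*K₂+lam+2*eps) := by
    intro i
    have hdq : dist (q (umax i)) (q (umax (i+1))) ≤ 2*K₂ + lam + eps := by
      calc dist (q (umax i)) (q (umax (i+1)))
          ≤ dist (q (umax i)) (p (tmin i)) + dist (p (tmin i)) (p (tmin (i+1)))
            + dist (p (tmin (i+1))) (q (umax (i+1))) := dist_triangle4 _ _ _ _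
        _ ≤ K₂ + (lam+eps) + K₂ := by
            refine add_le_add (add_le_add ?_ (hppstep i)) (hE1 (i+1))
            rw [dist_comm]; exact hE1 i
        _ = 2*K₂ + lam + eps := by ring
    have hlo := (hqgq (umax i) (hu_mem i) (umax (i+1)) (hu_mem (i+1))).1
    have h' : |umax i - umax (i+1)| / lam ≤ 2*K₂+lam+eps + eps := by linarith
    rw [div_le_iff₀ hlam] at h'
    have habs : umax (i+1) - umax i ≤ |umax i - umax (i+1)| := by
      rw [abs_sub_comm]; exact le_abs_self _
    have : (2*K₂+lam+eps+eps)*lam = lam*(2*K₂+lam+2*eps) := by ring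
    linarith
  -- segment bounds
  have hseg1 : ∀ i s, tmin i ≤ s → s ≤ tmin (i+1) → dist (p s) (q (umax i)) ≤ K₃ := by
    intro i s hs1 hs2
    have hsI : s ∈ Set.Icc 0 S := ⟨le_trans (htmin_mem i).1 hs1, le_trans hs2 (htmin_mem (i+1)).2⟩
    have hps : dist (p s) (p (tmin i)) ≤ lam + eps := by
      have hb := (hqgp s hsI (tmin i) (htmin_mem i)).2
      have habs : |s - tmin i| ≤ 1 := abs_le.mpr ⟨by linarith, by linarith [htmin_diff i]⟩
      have := mul_le_mul_of_nonneg_left habs hlam.le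
      linarith
    calc dist (p s) (q (umax i))
        ≤ dist (p s) (p (tmin i)) + dist (p (tmin i)) (q (umax i)) := dist_triangle _ _ _
      _ ≤ (lam+eps) + K₂ := add_le_add hps (hE1 i)
      _ ≤ K₃ := by rw [hK₃def, fellowK3, ← hK₂]; linarith
  have hseg2 : ∀ i v, umax i ≤ v → v ≤ umax (i+1) → dist (p (tmin (i+1))) (q v) ≤ K₃ := by
    intro i v hv1 hv2
    have hvI : v ∈ Set.Icc 0 T := ⟨le_trans (hu_mem i).1 hv1, le_trans hv2 (hu_mem (i+1)).2⟩
    have hqv : dist (q v) (q (umax i)) ≤ lam*(lam*(2*K₂+lam+2*eps)) + eps := by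
      have hb := (hqgq v hvI (umax i) (hu_mem i)).2
      have habs : |v - umax i| ≤ lam*(2*K₂+lam+2*eps) :=
        abs_le.mpr ⟨by linarith, by linarith [hE2 i]⟩
      have := mul_le_mul_of_nonneg_left habs hlam.le
      linarith
    calc dist (p (tmin (i+1))) (q v)
        ≤ dist (p (tmin (i+1))) (p (tmin i)) + dist (p (tmin i)) (q (umax i))
          + dist (q (umax i)) (q v) := dist_triangle4 _ _ _ _
      _ ≤ (lam+eps) + K₂ + (lam*(lam*(2*K₂+lam+2*eps)) + eps) := by
          refine add_le_add (add_le_add ?_ (hE1 i)) ?_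
          · rw [dist_comm]; exact hppstep i
          · rw [dist_comm]; exact hqv
      _ = K₃ := by rw [hK₃def, fellowK3, ← hK₂]; ring
  -- the reparameterizations
  set a : ℕ → ℝ := fun j => tmin ((j+1)/2) with ha
  set b : ℕ → ℝ := fun j => umax (j/2) with hb
  have hamono : ∀ k < 2*N, a k ≤ a (k+1) := fun k _ => htmin_mono _ _ (by omega)
  have hbmono : ∀ k < 2*N, b k ≤ b (k+1) := fun k _ => hu_mono _ _ (by omega)
  have ha0 : a 0 = 0 := by
    simp only [ha]
    norm_num [htmin]
    exact hS0
  have hb0 : 0 ≤ b 0 := (hu_mem 0).1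
  have haN : a (2*N) = S := by
    simp only [ha]
    rw [show (2*N+1)/2 = N by omega]
    exact htminN
  have hbN : b (2*N) = T := by
    simp only [hb]
    rw [show (2*N)/2 = N by omega]
    exact huN
  refine ⟨pl a (2*N), pl b (2*N),
    (pl_monotone hamono).monotoneOn _, (pl_continuous a _).continuousOn, ?_, pl_tendsto hamono,
    (pl_monotone hbmono).monotoneOn _, (pl_continuous b _).continuousOn, ?_, pl_tendsto hbmono,
    ?_⟩
  · intro t ht
    have h0 : pl a (2*N) 0 = a 0 := by
      have := pl_nat a (Nat.zero_le (2*N))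
      simpa using this
    have := pl_monotone hamono (ht : (0:ℝ) ≤ t)
    simp only [Set.mem_Ici]
    rw [h0, ha0] at this
    exact this
  · intro t ht
    have h0 : pl b (2*N) 0 = b 0 := by
      have := pl_nat b (Nat.zero_le (2*N))
      simpa using this
    have := pl_monotone hbmono (ht : (0:ℝ) ≤ t)
    simp only [Set.mem_Ici]
    rw [h0] at this
    linarith
  · intro τ hτ0
    by_cases hbig : ((2*N : ℕ):ℝ) ≤ τ
    · rw [pl_tail a (2*N) hbig, pl_tail b (2*N) hbig, haN, hbN]
      rw [hpathp.2 (S + (τ - (2*N:ℕ))) (by linarith), hpathq.2 (T + (τ - (2*N:ℕ))) (by linarith)]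
      calc dist (p S) (q T) ≤ H₀ := h2
        _ ≤ K₃ := by linarith
        _ ≤ max 0 K₃ := hK₃max
    · push_neg at hbig
      set j := Nat.floor τ with hj
      have hjτ : (j:ℝ) ≤ τ := Nat.floor_le hτ0
      have hτj1 : τ < (j:ℝ) + 1 := Nat.lt_floor_add_one τ
      have hj2N : j < 2*N := by
        rw [hj]
        exact (Nat.floor_lt hτ0).mpr (by exact_mod_cast hbig)
      have hφ1 : a j ≤ pl a (2*N) τ := by
        rw [← pl_nat a (by omega : j ≤ 2*N)]
        exact pl_monotone hamono hjτ
      have hφ2 : pl a (2*N) τ ≤ a (j+1) := by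
        rw [← pl_nat a (by omega : j+1 ≤ 2*N)]
        refine pl_monotone hamono ?_
        push_cast; linarith
      have hψ1 : b j ≤ pl b (2*N) τ := by
        rw [← pl_nat b (by omega : j ≤ 2*N)]
        exact pl_monotone hbmono hjτ
      have hψ2 : pl b (2*N) τ ≤ b (j+1) := by
        rw [← pl_nat b (by omega : j+1 ≤ 2*N)]
        refine pl_monotone hbmono ?_
        push_cast; linarith
      refine le_trans ?_ hK₃max
      rcases Nat.even_or_odd j with ⟨i, hi⟩ | ⟨i, hi⟩
      · -- j = 2i : φ moves in [tmin i, tmin (i+1)], ψ = umax i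
        have haj : a j = tmin i := by simp only [ha]; congr 1; omega
        have haj1 : a (j+1) = tmin (i+1) := by simp only [ha]; congr 1; omega
        have hbj : b j = umax i := by simp only [hb]; congr 1; omega
        have hbj1 : b (j+1) = umax i := by simp only [hb]; congr 1; omega
        have hψeq : pl b (2*N) τ = umax i := by
          refine le_antisymm ?_ ?_
          · rw [← hbj1]; exact hψ2
          · rw [← hbj]; exact hψ1
        rw [hψeq]
        exact hseg1 i _ (haj ▸ hφ1) (haj1 ▸ hφ2)
      · -- j = 2i+1 : φ = tmin (i+1), ψ moves in [umax i, umax (i+1)]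
        have haj : a j = tmin (i+1) := by simp only [ha]; congr 1; omega
        have haj1 : a (j+1) = tmin (i+1) := by simp only [ha]; congr 1; omega
        have hbj : b j = umax i := by simp only [hb]; congr 1; omega
        have hbj1 : b (j+1) = umax (i+1) := by simp only [hb]; congr 1; omega
        have hφeq : pl a (2*N) τ = tmin (i+1) := by
          refine le_antisymm ?_ ?_
          · rw [← haj1]; exact hφ2
          · rw [← haj]; exact hφ1
        rw [hφeq]
        exact hseg2 i _ (hbj ▸ hψ1) (hbj1 ▸ hψ2)
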